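/- Let f : ℝⁿ → ℝ be continuously differentiable, let X = {x ∈ ℝⁿ | f(x) = 0}, and let z ∈ X be such that ∇f(z) ≠ 0. Let K ≥ 0 and let [a] be a K-gradient-enclosure for f. Then the centered map ℒ, defined on boxes by ℒ([x]) = {x ∈ [x] | ∃a ∈ [a]([x]), f(m) + ⟨a, x − m⟩ = 0} where m is the center of [x], is a wrapper for X which has order 1 at z. -/

import Mathlib

open Classical Filter Topology

/-- An axis-aligned box of `ℝⁿ`: a product of nonempty compact intervals. -/
structure Box (n : ℕ) where
  lower : Fin n → ℝ
  upper : Fin n → ℝ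
  lower_le_upper : ∀ i, lower i ≤ upper i

namespace Box

/-- The set of points of a box. -/
def pts {n : ℕ} (B : Box n) : Set (Fin n → ℝ) :=
  {x | ∀ i, x i ∈ Set.Icc (B.lower i) (B.upper i)}

/-- The width of a box: the largest edge length. -/
noncomputable def width {n : ℕ} (B : Box n) : ℝ := ⨆ i, (B.upper i - B.lower i)

/-- The center of a box. -/
noncomputable def center {n : ℕ} (B : Box n) : Fin n → ℝ :=
  fun i => (B.lower i + B.upper i) / 2

end Box

/-- Proximity `h(A, X) = sup_{a ∈ A} inf_{x ∈ X} ‖a − x‖∞` of a set `A` to a set `X`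
(the norm on `Fin n → ℝ` is the sup norm); the convention `h(∅, X) = 0` holds since a
supremum over an empty index set is `0` in `ℝ`. -/
noncomputable def prox {n : ℕ} (A X : Set (Fin n → ℝ)) : ℝ :=
  ⨆ a : A, Metric.infDist (a : Fin n → ℝ) X

/-- A nested sequence of boxes converging to the point `z` (in the sup norm). -/
def ConvergesTo {n : ℕ} (B : ℕ → Box n) (z : Fin n → ℝ) : Prop :=
  (∀ k, (B (k + 1)).pts ⊆ (B k).pts) ∧
  Tendsto (fun k => ⨆ p : (B k).pts, ‖(p : Fin n → ℝ) - z‖) atTop (𝓝 0)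

/-- A wrapper for `X`: contraction, consistency, and accuracy. -/
def IsWrapper {n : ℕ} (X : Set (Fin n → ℝ)) (W : Box n → Set (Fin n → ℝ)) : Prop :=
  (∀ B : Box n, W B ⊆ B.pts) ∧
  (∀ B : Box n, B.pts ∩ X ⊆ W B) ∧
  (∀ x : Fin n → ℝ, x ∉ X → ∃ ε > (0 : ℝ), ∀ B : Box n,
      B.pts ⊆ Metric.closedBall x ε → W B = ∅)

/-- The wrapper `W` for `X` has order `1` at `z`: for every nested sequence of boxes
converging to `z`, `h(W([x](k)), X) / w([x](k)) → 0`. -/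
def HasOrderOne {n : ℕ} (X : Set (Fin n → ℝ)) (W : Box n → Set (Fin n → ℝ))
    (z : Fin n → ℝ) : Prop :=
  ∀ B : ℕ → Box n, ConvergesTo B z →
    Tendsto (fun k => prox (W (B k)) X / (B k).width) atTop (𝓝 0)

/-- The box hull `⟦A⟧` of a set `A ⊆ ℝⁿ`: the smallest box containing `A`
(with `⟦∅⟧ = ∅`). -/
noncomputable def boxHull {n : ℕ} (A : Set (Fin n → ℝ)) : Set (Fin n → ℝ) :=
  if A = ∅ then ∅
  else {x | ∀ i, (⨅ a : A, (a : Fin n → ℝ) i) ≤ x i ∧ x i ≤ ⨆ a : A, (a : Fin n → ℝ) i}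

/-- A contractor for `X`: a map from boxes to boxes (the empty set is allowed as a value)
satisfying contraction and consistency. -/
def IsContractor {n : ℕ} (X : Set (Fin n → ℝ)) (C : Box n → Set (Fin n → ℝ)) : Prop :=
  (∀ B : Box n, (∃ B' : Box n, C B = B'.pts) ∨ C B = ∅) ∧
  (∀ B : Box n, C B ⊆ B.pts) ∧
  (∀ B : Box n, B.pts ∩ X ⊆ C B)

/-- The contractor `C` for `X` is asymptotically minimal at `z`: for every nested sequence
of boxes containing `z` and converging to `z`,
`h(C([x](k)), ⟦[x](k) ∩ X⟧) / w([x](k)) → 0`. -/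
def AsympMinimal {n : ℕ} (X : Set (Fin n → ℝ)) (C : Box n → Set (Fin n → ℝ))
    (z : Fin n → ℝ) : Prop :=
  ∀ B : ℕ → Box n, ConvergesTo B z → (∀ k, z ∈ (B k).pts) →
    Tendsto (fun k => prox (C (B k)) (boxHull ((B k).pts ∩ X)) / (B k).width)
      atTop (𝓝 0)

/-- The gradient of `f : ℝⁿ → ℝ` at `x`, as the vector of partial derivatives. -/
noncomputable def grad {n : ℕ} (f : (Fin n → ℝ) → ℝ) (x : Fin n → ℝ) : Fin n → ℝ :=
  fun j => fderiv ℝ f x (Pi.single j 1)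

/-- A `K`-gradient-enclosure for `f`: a map assigning to every box `[x]` an interval
vector (a box) `[a]([x])` containing `∇f(x)` for every `x ∈ [x]`, whose width is at most
`K · w([x])`. -/
def IsGradEnclosure {n : ℕ} (f : (Fin n → ℝ) → ℝ) (K : ℝ) (a : Box n → Box n) : Prop :=
  ∀ B : Box n, (∀ x ∈ B.pts, grad f x ∈ (a B).pts) ∧ (a B).width ≤ K * B.width

/-- The centered map associated with `f` and a gradient enclosure `a`:
`ℒ([x]) = {x ∈ [x] | ∃ α ∈ [a]([x]), f(m) + ⟨α, x − m⟩ = 0}`, `m = center([x])`. -/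
noncomputable def centeredMap {n : ℕ} (f : (Fin n → ℝ) → ℝ) (a : Box n → Box n)
    (B : Box n) : Set (Fin n → ℝ) :=
  {x ∈ B.pts | ∃ α ∈ (a B).pts, f B.center + ∑ j, α j * (x j - B.center j) = 0}
section Aux

lemma clm_apply_eq_sum {n : ℕ} (L : (Fin n → ℝ) →L[ℝ] ℝ) (v : Fin n → ℝ) :
    L v = ∑ j, v j * L (Pi.single j 1) := by
  have h := LinearMap.pi_apply_eq_sum_univ (L : (Fin n → ℝ) →ₗ[ℝ] ℝ) v
  have h2 : ∀ i : Fin n, (Pi.single i 1 : Fin n → ℝ) = fun j => if i = j then 1 else 0 :=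
    fun i => funext fun j => by simp [Pi.single_apply, eq_comm]
  simp only [ContinuousLinearMap.coe_coe, smul_eq_mul] at h
  rw [h]
  exact Finset.sum_congr rfl fun i _ => by rw [h2 i]

lemma aux_line {n : ℕ} {f : (Fin n → ℝ) → ℝ} (hf : ContDiff ℝ 1 f) (y v : Fin n → ℝ) (t : ℝ) :
    HasDerivAt (fun t : ℝ => f (y + t • v)) (∑ j, v j * grad f (y + t • v) j) t := by
  have h1 : HasDerivAt (fun t : ℝ => y + t • v) v t := by
    simpa using ((hasDerivAt_id t).smul_const v).const_add y
  have h2 := ((hf.differentiable one_ne_zero) (y + t • v)).hasFDerivAt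
  have h3 := h2.comp_hasDerivAt t h1
  have h4 : fderiv ℝ f (y + t • v) v = ∑ j, v j * grad f (y + t • v) j :=
    clm_apply_eq_sum _ v
  rw [← h4]
  exact h3

lemma aux_mvt {n : ℕ} {f : (Fin n → ℝ) → ℝ} (hf : ContDiff ℝ 1 f) (x y : Fin n → ℝ) :
    ∃ c ∈ Set.Icc (0:ℝ) 1,
      f x - f y = ∑ j, grad f (y + c • (x - y)) j * (x j - y j) := by
  have hcont : ContinuousOn (fun t : ℝ => f (y + t • (x - y))) (Set.Icc 0 1) :=
    (hf.continuous.comp (by continuity)).continuousOn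
  obtain ⟨c, hc, hceq⟩ := exists_hasDerivAt_eq_slope (fun t : ℝ => f (y + t • (x - y)))
    (fun t => ∑ j, (x - y) j * grad f (y + t • (x - y)) j) one_pos hcont
    (fun t _ => aux_line hf y (x - y) t)
  refine ⟨c, ⟨hc.1.le, hc.2.le⟩, ?_⟩
  have h1 : y + (1:ℝ) • (x - y) = x := by simp
  have h0 : y + (0:ℝ) • (x - y) = y := by simp
  rw [h1, h0] at hceq
  norm_num at hceq
  rw [← hceq]
  exact Finset.sum_congr rfl fun j _ => by simp [Pi.sub_apply, mul_comm]

lemma aux_seg_mem {n : ℕ} (B : Box n) {x y : Fin n → ℝ} (hx : x ∈ B.pts) (hy : y ∈ B.pts)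
    {c : ℝ} (hc : c ∈ Set.Icc (0:ℝ) 1) : y + c • (x - y) ∈ B.pts := by
  intro i
  have h1 := hx i; have h2 := hy i; obtain ⟨hc0, hc1⟩ := hc
  simp only [Set.mem_Icc] at h1 h2 ⊢
  simp only [Pi.add_apply, Pi.smul_apply, Pi.sub_apply, smul_eq_mul]
  constructor <;> nlinarith [h1.1, h1.2, h2.1, h2.2]

lemma Box.lower_mem_pts {n : ℕ} (B : Box n) : B.lower ∈ B.pts :=
  fun i => ⟨le_refl _, B.lower_le_upper i⟩

lemma Box.upper_mem_pts {n : ℕ} (B : Box n) : B.upper ∈ B.pts :=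
  fun i => ⟨B.lower_le_upper i, le_refl _⟩

lemma Box.center_mem_pts {n : ℕ} (B : Box n) : B.center ∈ B.pts := by
  intro i
  have := B.lower_le_upper i
  constructor <;> · simp only [Box.center]; linarith

lemma Box.width_nonneg {n : ℕ} (B : Box n) : 0 ≤ B.width :=
  Real.iSup_nonneg fun i => sub_nonneg.2 (B.lower_le_upper i)

lemma Box.sub_le_width {n : ℕ} (B : Box n) (i : Fin n) : B.upper i - B.lower i ≤ B.width :=
  le_ciSup (f := fun i => B.upper i - B.lower i) (Set.Finite.bddAbove (Set.finite_range _)) i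

lemma Box.isCompact_pts {n : ℕ} (B : Box n) : IsCompact B.pts := by
  have h : B.pts = Set.pi Set.univ (fun i => Set.Icc (B.lower i) (B.upper i)) := by
    ext x
    simp only [Box.pts, Set.mem_setOf_eq, Set.mem_pi, Set.mem_univ, forall_true_left]
  rw [h]
  exact isCompact_univ_pi fun i => isCompact_Icc

lemma Box.width_le_of_subset_closedBall {n : ℕ} (B : Box n) {x : Fin n → ℝ} {ε : ℝ}
    (h : B.pts ⊆ Metric.closedBall x ε) : B.width ≤ 2 * ε := by
  have hl := h B.lower_mem_pts
  have hu := h B.upper_mem_pts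
  simp only [Metric.mem_closedBall] at hl hu
  have hε : 0 ≤ ε := le_trans dist_nonneg hl
  refine Real.iSup_le (fun i => ?_) (by linarith)
  have h1 : dist (B.upper i) (x i) ≤ ε := le_trans (dist_le_pi_dist _ _ i) hu
  have h2 : dist (B.lower i) (x i) ≤ ε := le_trans (dist_le_pi_dist _ _ i) hl
  rw [Real.dist_eq] at h1 h2
  have := abs_le.1 h1; have := abs_le.1 h2
  linarith [(abs_le.1 h1).1, (abs_le.1 h1).2, (abs_le.1 h2).1, (abs_le.1 h2).2]

end Aux
section Aux2

lemma aux_key {n : ℕ} {f : (Fin n → ℝ) → ℝ} (hf : ContDiff ℝ 1 f) {K : ℝ} (hK : 0 ≤ K)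
    {a : Box n → Box n} (ha : IsGradEnclosure f K a) (B : Box n) (y : Fin n → ℝ)
    (hy : y ∈ centeredMap f a B) : |f y| ≤ n * K * B.width ^ 2 := by
  obtain ⟨hyB, α, hα, heq⟩ := hy
  obtain ⟨c, hc, hmvt⟩ := aux_mvt hf y B.center
  set ξ := B.center + c • (y - B.center) with hξdef
  have hξ : ξ ∈ B.pts := aux_seg_mem B hyB B.center_mem_pts hc
  set g := grad f ξ with hgdef
  have hgmem : g ∈ (a B).pts := (ha B).1 ξ hξ
  have hfy : f y = ∑ j, (g j - α j) * (y j - B.center j) := by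
    simp only [sub_mul, Finset.sum_sub_distrib]
    linarith [hmvt, heq]
  have hw0 := B.width_nonneg
  have hterm : ∀ j : Fin n, |(g j - α j) * (y j - B.center j)|
      ≤ (K * B.width) * (B.width / 2) := by
    intro j
    have h1 : |g j - α j| ≤ K * B.width := by
      have hga := hgmem j; have haa := hα j
      have hub : (a B).upper j - (a B).lower j ≤ (a B).width := (a B).sub_le_width j
      have := (ha B).2
      rw [abs_le]
      constructor <;> [linarith [hga.1, haa.2]; linarith [hga.2, haa.1]]
    have h2 : |y j - B.center j| ≤ B.width / 2 := by
      have hyj := hyB j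
      have hub : B.upper j - B.lower j ≤ B.width := B.sub_le_width j
      rw [abs_le]
      simp only [Box.center]
      constructor <;> [linarith [hyj.1]; linarith [hyj.2]]
    rw [abs_mul]
    exact mul_le_mul h1 h2 (abs_nonneg _) (mul_nonneg hK hw0)
  calc |f y| = |∑ j, (g j - α j) * (y j - B.center j)| := by rw [hfy]
    _ ≤ ∑ j, |(g j - α j) * (y j - B.center j)| := Finset.abs_sum_le_sum_abs _ _
    _ ≤ ∑ _j : Fin n, (K * B.width) * (B.width / 2) :=
        Finset.sum_le_sum fun j _ => hterm j
    _ = n * ((K * B.width) * (B.width / 2)) := by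
        rw [Finset.sum_const, Finset.card_univ, Fintype.card_fin, nsmul_eq_mul]
    _ ≤ n * K * B.width ^ 2 := by
        have he : (n : ℝ) * (K * B.width * (B.width / 2)) = (n * K * B.width ^ 2) / 2 := by ring
        have hp : 0 ≤ (n : ℝ) * K * B.width ^ 2 := by positivity
        linarith

lemma aux_zero {n : ℕ} {f : (Fin n → ℝ) → ℝ} (hf : ContDiff ℝ 1 f) (z : Fin n → ℝ)
    (hg : grad f z ≠ 0) :
    ∃ C > (0:ℝ), ∃ δ > (0:ℝ), ∀ y : Fin n → ℝ, ‖y - z‖ ≤ δ → |f y| ≤ δ →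
      Metric.infDist y {x | f x = 0} ≤ C * |f y| := by
  obtain ⟨j, hj⟩ : ∃ j, grad f z j ≠ 0 := by
    by_contra h
    push_neg at h
    exact hg (funext fun j => h j)
  set v : Fin n → ℝ := Pi.single j (grad f z j)⁻¹ with hvdef
  set φ : (Fin n → ℝ) → ℝ := fun w => ∑ j', v j' * grad f w j' with hφdef
  have hφc : Continuous φ := by
    apply continuous_finset_sum
    intro j' _
    apply Continuous.mul continuous_const
    exact (hf.continuous_fderiv one_ne_zero).clm_apply continuous_const
  have hφz : φ z = 1 := by
    simp only [hφdef, hvdef, Pi.single_apply, ite_mul, zero_mul]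
    rw [Finset.sum_ite_eq' (Finset.univ) j (fun j' => (grad f z j)⁻¹ * grad f z j')]
    simp [inv_mul_cancel₀ hj]
  -- derivative along v
  have hline : ∀ (y : Fin n → ℝ) (t : ℝ),
      HasDerivAt (fun t : ℝ => f (y + t • v)) (φ (y + t • v)) t :=
    fun y t => aux_line hf y v t
  -- neighborhood where φ ≥ 1/2
  obtain ⟨ε, hε, hball⟩ : ∃ ε > 0, ∀ w, dist w z < ε → 1/2 < φ w := by
    have h1 : ∀ᶠ w in 𝓝 z, 1/2 < φ w := by
      have h2 : Tendsto φ (𝓝 z) (𝓝 1) := hφz ▸ (hφc.continuousAt (x := z))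
      exact h2.eventually_const_lt (by norm_num)
    rw [Metric.eventually_nhds_iff] at h1
    obtain ⟨ε, hε, h⟩ := h1
    exact ⟨ε, hε, fun w hw => h hw⟩
  set δ₀ := ε / 2 with hδ₀def
  have hδ₀ : 0 < δ₀ := by positivity
  have hball' : ∀ w : Fin n → ℝ, ‖w - z‖ ≤ δ₀ → 1/2 ≤ φ w := by
    intro w hw
    refine le_of_lt (hball w ?_)
    rw [dist_eq_norm]; linarith
  have hv0 : v ≠ 0 := by
    intro h
    have h2 := congrFun h j
    rw [hvdef] at h2
    simp only [Pi.single_apply, if_pos rfl, Pi.zero_apply] at h2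
    exact hj (by simpa using inv_eq_zero.mp h2)
  set V := ‖v‖ with hVdef
  have hV : 0 < V := norm_pos_iff.2 hv0
  refine ⟨2 * V, by positivity, min (δ₀ / 2) (δ₀ / (8 * V)), by positivity, fun y hy hfy => ?_⟩
  have hy1 : ‖y - z‖ ≤ δ₀ / 2 := le_trans hy (min_le_left _ _)
  have hfy1 : |f y| ≤ δ₀ / (8 * V) := le_trans hfy (min_le_right _ _)
  rcases eq_or_ne (f y) 0 with h0 | h0
  · rw [Metric.infDist_zero_of_mem (by simpa using h0)]
    positivity
  · set b := 2 * |f y| with hbdef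
    have hb : 0 < b := by
      have := abs_pos.2 h0; linarith
    -- points on the segment stay in the ball
    have hseg : ∀ t : ℝ, |t| ≤ b → ‖y + t • v - z‖ ≤ δ₀ := by
      intro t ht
      have h1 : ‖y + t • v - z‖ ≤ ‖y - z‖ + ‖t • v‖ := by
        have : y + t • v - z = (y - z) + t • v := by ring_nf
        rw [this]; exact norm_add_le _ _
      have h2 : ‖t • v‖ = |t| * V := by rw [norm_smul, Real.norm_eq_abs]
      have h3 : |t| * V ≤ b * V := mul_le_mul_of_nonneg_right ht hV.le
      have h4 : b * V ≤ δ₀ / 4 := by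
        rw [hbdef]
        have : |f y| * V ≤ (δ₀ / (8 * V)) * V := mul_le_mul_of_nonneg_right hfy1 hV.le
        have hx : (δ₀ / (8 * V)) * V = δ₀ / 8 := by field_simp
        rw [hx] at this
        linarith
      linarith
    have hcont : ∀ s t : ℝ, ContinuousOn (fun t : ℝ => f (y + t • v)) (Set.Icc s t) :=
      fun s t => (hf.continuous.comp (by continuity)).continuousOn
    -- g b ≥ 0
    have hgb : 0 ≤ f (y + b • v) := by
      obtain ⟨c, hc, hceq⟩ := exists_hasDerivAt_eq_slope (fun t : ℝ => f (y + t • v))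
        (fun t => φ (y + t • v)) hb (hcont 0 b) (fun t _ => hline y t)
      have hφc2 : 1/2 ≤ φ (y + c • v) := by
        apply hball'
        apply hseg
        rw [abs_of_pos hc.1]
        exact hc.2.le
      rw [hceq] at hφc2
      simp only [zero_smul, add_zero, sub_zero] at hφc2
      rw [le_div_iff₀ hb] at hφc2
      have hna := neg_abs_le (f y)
      rw [hbdef] at hφc2
      linarith
    -- g (-b) ≤ 0
    have hga : f (y + (-b) • v) ≤ 0 := by
      have hlt : (-b : ℝ) < 0 := by linarith
      obtain ⟨c, hc, hceq⟩ := exists_hasDerivAt_eq_slope (fun t : ℝ => f (y + t • v))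
        (fun t => φ (y + t • v)) hlt (hcont (-b) 0) (fun t _ => hline y t)
      have hφc2 : 1/2 ≤ φ (y + c • v) := by
        apply hball'
        apply hseg
        rw [abs_le]
        exact ⟨hc.1.le, by linarith [hc.2]⟩
      rw [hceq] at hφc2
      simp only [zero_smul, add_zero, sub_neg_eq_add, zero_add] at hφc2
      rw [le_div_iff₀ hb] at hφc2
      have hla := le_abs_self (f y)
      rw [hbdef] at hφc2
      linarith
    obtain ⟨t, ht, hgt⟩ := intermediate_value_Icc (by linarith : (-b : ℝ) ≤ b)
      (hcont (-b) b) (Set.mem_Icc.2 ⟨hga, hgb⟩)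
    have hmem : y + t • v ∈ {x : Fin n → ℝ | f x = 0} := hgt
    have hd : Metric.infDist y {x : Fin n → ℝ | f x = 0} ≤ dist y (y + t • v) :=
      Metric.infDist_le_dist_of_mem hmem
    have hdist : dist y (y + t • v) = |t| * V := by
      rw [dist_eq_norm]
      have : y - (y + t • v) = -(t • v) := by ring_nf
      rw [this, norm_neg, norm_smul, Real.norm_eq_abs]
    have htb : |t| ≤ b := abs_le.2 ⟨ht.1, ht.2⟩
    rw [hdist] at hd
    have : |t| * V ≤ b * V := mul_le_mul_of_nonneg_right htb hV.le
    rw [hbdef] at this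
    linarith


end Aux2
theorem centeredMap_isWrapper_hasOrderOne {n : ℕ}
    (f : (Fin n → ℝ) → ℝ) (hf : ContDiff ℝ 1 f)
    (X : Set (Fin n → ℝ)) (hX : X = {x | f x = 0})
    (z : Fin n → ℝ) (hz : z ∈ X) (hgrad : grad f z ≠ 0)
    (K : ℝ) (hK : 0 ≤ K) (a : Box n → Box n) (ha : IsGradEnclosure f K a) :
    IsWrapper X (centeredMap f a) ∧ HasOrderOne X (centeredMap f a) z := by
  subst hX
  constructor
  · refine ⟨fun B x hx => hx.1, ?_, ?_⟩
    · -- consistency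
      rintro B x ⟨hxB, hx0⟩
      refine ⟨hxB, ?_⟩
      obtain ⟨c, hc, hmvt⟩ := aux_mvt hf x B.center
      refine ⟨grad f (B.center + c • (x - B.center)),
        (ha B).1 _ (aux_seg_mem B hxB B.center_mem_pts hc), ?_⟩
      have hx0' : f x = 0 := hx0
      linarith [hmvt]
    · -- accuracy
      intro x hx
      have hfx : f x ≠ 0 := hx
      have hfx0 : 0 < |f x| := abs_pos.2 hfx
      obtain ⟨δc, hδc, hcont⟩ : ∃ δc > (0:ℝ), ∀ w, dist w x ≤ δc → |f w - f x| ≤ |f x| / 2 := by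
        have h1 := Metric.continuousAt_iff.1 (hf.continuous.continuousAt (x := x))
          (|f x| / 2) (by linarith)
        obtain ⟨δ', hδ', h⟩ := h1
        refine ⟨δ' / 2, by linarith, fun w hw => ?_⟩
        have h2 : dist w x < δ' := by linarith
        have := h h2
        rw [Real.dist_eq] at this
        linarith
      set E := |f x| / (8 * (n * K + 1)) with hEdef
      have hE : 0 < E := by positivity
      refine ⟨min δc (min 1 E), by positivity, fun B hB => ?_⟩
      by_contra hne
      obtain ⟨y, hy⟩ := Set.nonempty_iff_ne_empty.2 hne
      set ε := min δc (min 1 E) with hεdef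
      have hε1 : ε ≤ 1 := le_trans (min_le_right _ _) (min_le_left _ _)
      have hεE : ε ≤ E := le_trans (min_le_right _ _) (min_le_right _ _)
      have hεδc : ε ≤ δc := min_le_left _ _
      have hε0 : 0 < ε := by positivity
      have hfy : |f y| ≤ n * K * B.width ^ 2 := aux_key hf hK ha B y hy
      have hw2 : B.width ≤ 2 * ε := B.width_le_of_subset_closedBall hB
      have hw0 := B.width_nonneg
      have hyx : dist y x ≤ δc := le_trans (hB hy.1) hεδc
      have hcy := hcont y hyx
      have habs : |f x| ≤ |f y - f x| + |f y| := by
        have h3 := abs_sub_abs_le_abs_sub (f x) (f y)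
        have h4 : |f x - f y| = |f y - f x| := abs_sub_comm _ _
        linarith [abs_nonneg (f y)]
      have hnk : (0:ℝ) ≤ (n : ℝ) * K := mul_nonneg (Nat.cast_nonneg _) hK
      have hsq : B.width ^ 2 ≤ 4 * ε * ε := by nlinarith
      have hb1 : |f y| ≤ (n * K : ℝ) * (4 * ε * ε) :=
        le_trans hfy (mul_le_mul_of_nonneg_left hsq hnk)
      have hb2 : (n * K : ℝ) * (4 * ε * ε) ≤ (n * K) * (4 * E) := by
        have h5 : ε * ε ≤ 1 * E := mul_le_mul hε1 hεE hε0.le zero_le_one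
        nlinarith
      have hb3 : (n * K : ℝ) * (4 * E) < |f x| / 2 := by
        have hEeq : E * (8 * ((n:ℝ) * K + 1)) = |f x| := by
          rw [hEdef]; field_simp
        nlinarith [hE, hnk]
      linarith
  · -- order 1
    intro B hB
    set s : ℕ → ℝ := fun k => ⨆ p : (B k).pts, ‖(p : Fin n → ℝ) - z‖ with hsdef
    have hs : Tendsto s atTop (𝓝 0) := hB.2
    have hsub : ∀ k, (B k).pts ⊆ Metric.closedBall z (s k) := by
      intro k p hp
      have hb : BddAbove (Set.range fun p : (B k).pts => ‖(p : Fin n → ℝ) - z‖) := by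
        obtain ⟨M, hM⟩ := ((B k).isCompact_pts.image
          (Continuous.norm (continuous_id.sub continuous_const))).bddAbove
        refine ⟨M, ?_⟩
        rintro r ⟨q, rfl⟩
        exact hM ⟨q, q.2, rfl⟩
      have h1 := le_ciSup hb (⟨p, hp⟩ : (B k).pts)
      simpa [Metric.mem_closedBall, dist_eq_norm] using h1
    have hs0 : ∀ k, 0 ≤ s k := fun k => Real.iSup_nonneg fun p => norm_nonneg _
    obtain ⟨C, hC, δ, hδ, hzero⟩ := aux_zero hf z hgrad
    have hnk : (0:ℝ) ≤ (n : ℝ) * K := mul_nonneg (Nat.cast_nonneg _) hK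
    set ε₁ := min δ (min 1 (δ / (4 * n * K + 1))) with hε₁def
    have hε₁ : 0 < ε₁ := by positivity
    have hev : ∀ᶠ k in atTop, s k < ε₁ := hs.eventually_lt_const hε₁
    apply squeeze_zero' (g := fun k => (2 * C * (n * K)) * s k)
    · filter_upwards with k
      exact div_nonneg (Real.iSup_nonneg fun p => Metric.infDist_nonneg) (B k).width_nonneg
    · filter_upwards [hev] with k hk
      have hw2 : (B k).width ≤ 2 * s k := (B k).width_le_of_subset_closedBall (hsub k)
      have hw0 := (B k).width_nonneg
      have hsk1 : s k ≤ 1 := le_trans hk.le (le_trans (min_le_right _ _) (min_le_left _ _))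
      have hskδ : s k ≤ δ := le_trans hk.le (min_le_left _ _)
      have hskE : s k ≤ δ / (4 * n * K + 1) :=
        le_trans hk.le (le_trans (min_le_right _ _) (min_le_right _ _))
      have hkey : ∀ y : (centeredMap f a (B k)),
          Metric.infDist (y : Fin n → ℝ) {x | f x = 0} ≤ C * ((n * K) * (B k).width ^ 2) := by
        rintro ⟨y, hy⟩
        have hyB : y ∈ (B k).pts := hy.1
        have hyz : ‖y - z‖ ≤ δ := by
          have := hsub k hyB
          rw [Metric.mem_closedBall, dist_eq_norm] at this
          linarith
        have hfy : |f y| ≤ n * K * (B k).width ^ 2 := aux_key hf hK ha (B k) y hy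
        have hsq : (B k).width ^ 2 ≤ 4 * s k * s k := by nlinarith
        have hfyδ : |f y| ≤ δ := by
          have h8 : s k * (4 * n * K + 1) ≤ δ := by
            rw [le_div_iff₀ (by positivity)] at hskE
            linarith
          have h9 : s k * s k ≤ s k := by nlinarith [hs0 k]
          nlinarith [mul_le_mul_of_nonneg_left hsq hnk,
            mul_le_mul_of_nonneg_left h9 hnk, h8, hfy, hs0 k]
        have := hzero y hyz hfyδ
        calc Metric.infDist y {x | f x = 0} ≤ C * |f y| := this
          _ ≤ C * ((n * K) * (B k).width ^ 2) := by
              apply mul_le_mul_of_nonneg_left _ hC.le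
              calc |f y| ≤ (n : ℝ) * K * (B k).width ^ 2 := hfy
                _ = (n * K : ℝ) * (B k).width ^ 2 := by ring
      have hprox : prox (centeredMap f a (B k)) {x | f x = 0}
          ≤ C * ((n * K) * (B k).width ^ 2) :=
        Real.iSup_le hkey (by positivity)
      have hprox0 : 0 ≤ prox (centeredMap f a (B k)) {x | f x = 0} :=
        Real.iSup_nonneg fun p => Metric.infDist_nonneg
      rcases eq_or_lt_of_le hw0 with h0 | h0
      · rw [← h0, div_zero]
        exact mul_nonneg (mul_nonneg (by positivity) hnk) (hs0 k)
      · rw [div_le_iff₀ h0]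
        have h6 : C * ((n * K) * (B k).width ^ 2) ≤ (2 * C * (n * K) * s k) * (B k).width := by
          have h7 : (B k).width ^ 2 = (B k).width * (B k).width := sq (B k).width ▸ by ring
          nlinarith [mul_nonneg hnk hw0, hC.le, mul_nonneg (mul_nonneg hC.le hnk) hw0]
        linarith
    · have h10 := hs.const_mul (2 * C * (n * K))
      simpa only [mul_zero] using h10
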